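/- Let V be a Banach space with a normalized 1-subsymmetric basis (v_i), let 0 < γ < 1, and let X be a Banach space with a normalized basis (e_i) with projection constant K which satisfies asymptotic C-V-lower estimates for some C ≥ 1, i.e., ‖∑_{i=1}^n a_i x_i‖ ≥ C^{-1}‖∑_{i=1}^n a_i v_i‖_V whenever n ∈ ℕ, (x_i)_{i=1}^n is a normalized block sequence of (e_i)_{i=n}^∞ and (a_i)_{i=1}^n are real scalars. If γ ≤ (KC)^{-1}, then (e_i) K-dominates the unit vector basis (t_i) of the Tsirelson space T(V,γ). -/

import Mathlib

open Filter Topology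
open scoped ENNReal

noncomputable section

/-- A real Banach space is *reflexive* if the canonical inclusion into its double dual is
surjective. -/
def IsReflexiveSpace (X : Type*) [NormedAddCommGroup X] [NormedSpace ℝ X] : Prop :=
  Function.Surjective (NormedSpace.inclusionInDoubleDual ℝ X)

section Sequences

variable {E F V U : Type*}
variable [NormedAddCommGroup E] [NormedSpace ℝ E] [NormedAddCommGroup F] [NormedSpace ℝ F]
variable [NormedAddCommGroup V] [NormedSpace ℝ V] [NormedAddCommGroup U] [NormedSpace ℝ U]

/-- `(f i)` `C`-dominates `(e i)`: `‖∑ aᵢ eᵢ‖ ≤ C ‖∑ aᵢ fᵢ‖` for all finitely supported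
real scalar sequences `a`. -/
def Dominates (C : ℝ) (f : ℕ → F) (e : ℕ → E) : Prop :=
  ∀ a : ℕ →₀ ℝ, ‖a.sum fun i c => c • e i‖ ≤ C * ‖a.sum fun i c => c • f i‖

/-- `(f i)_{i<k}` `C`-dominates `(e i)_{i<k}`. -/
def DominatesFin {k : ℕ} (C : ℝ) (f : Fin k → F) (e : Fin k → E) : Prop :=
  ∀ a : Fin k → ℝ, ‖∑ i, a i • e i‖ ≤ C * ‖∑ i, a i • f i‖

/-- The sequence `(v i)` is normalized. -/
def SeqNormalized (v : ℕ → V) : Prop := ∀ i, ‖v i‖ = 1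

/-- The sequence `(v i)` is 1-unconditional. -/
def SeqUncond (v : ℕ → V) : Prop :=
  ∀ (s : Finset ℕ) (a ε : ℕ → ℝ), (∀ i, |ε i| ≤ 1) →
    ‖∑ i ∈ s, (ε i * a i) • v i‖ ≤ ‖∑ i ∈ s, a i • v i‖

/-- The sequence `(v i)` is 1-spreading. -/
def SeqSpreading (v : ℕ → V) : Prop :=
  ∀ (s : Finset ℕ) (a : ℕ → ℝ) (n : ℕ → ℕ), StrictMono n →
    ‖∑ i ∈ s, a i • v (n i)‖ = ‖∑ i ∈ s, a i • v i‖

/-- The closed linear span of `(v i)` is the whole space. -/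
def SeqTotal (v : ℕ → V) : Prop :=
  (Submodule.span ℝ (Set.range v)).topologicalClosure = ⊤

/-- `(v i)` is a normalized 1-unconditional (Schauder) basis of `V`. -/
def Is1UncondBasis (v : ℕ → V) : Prop :=
  SeqNormalized v ∧ SeqUncond v ∧ SeqTotal v

/-- `(v i)` is a normalized 1-subsymmetric (i.e. 1-unconditional and 1-spreading) basis. -/
def Is1SubsymBasis (v : ℕ → V) : Prop :=
  Is1UncondBasis v ∧ SeqSpreading v

/-- `(b j)` is a block sequence of the basis `(v i)`: each `b j` is a nonzero finite linear
combination of the `v i`'s, and the supports are successive. -/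
def IsBlockSeqOfBasis (v : ℕ → V) (b : ℕ → V) : Prop :=
  ∃ c : ℕ → (ℕ →₀ ℝ),
    (∀ j, b j = (c j).sum fun i r => r • v i) ∧ (∀ j, b j ≠ 0) ∧
    ∀ j, ∀ i ∈ (c j).support, ∀ i' ∈ (c (j + 1)).support, i < i'

/-- The strong right shift property (SRS) of the basis `(v i)`. -/
def HasSRS (v : ℕ → V) : Prop :=
  ∃ c > (0 : ℝ), ∀ (n : ℕ) (a : ℕ →₀ ℝ),
    c * ‖a.sum fun i r => r • v i‖ ≤ ‖a.sum fun i r => r • v (i + n)‖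

/-- The weak left shift property (WLS) of the basis `(v i)`. -/
def HasWLS (v : ℕ → V) : Prop :=
  ∃ d > (0 : ℝ), ∀ m : ℕ, ∃ L : ℕ, m ≤ L ∧ ∀ k ≤ m, ∀ a : ℕ →₀ ℝ, (∀ i ≤ L, a i = 0) →
    ∀ b : ℕ →₀ ℝ, (∀ j, b j = a (j + k)) →
      d * ‖a.sum fun i r => r • v i‖ ≤ ‖b.sum fun i r => r • v i‖

end Sequences

section Trees

variable {X V U : Type*} [NormedAddCommGroup X] [NormedSpace ℝ X]
variable [NormedAddCommGroup V] [NormedSpace ℝ V] [NormedAddCommGroup U] [NormedSpace ℝ U]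

/-- The branch of the tree `(x_α)` (indexed by finite strictly increasing lists of naturals)
along the strictly increasing sequence `n`. -/
def TreeBranch (x : List ℕ → X) (n : ℕ → ℕ) : ℕ → X := fun i => x ((List.range (i + 1)).map n)

/-- The branch of a tree of length `k` along the strictly increasing sequence `n`. -/
def TreeBranchFin (k : ℕ) (x : List ℕ → X) (n : ℕ → ℕ) : Fin k → X :=
  fun i => x ((List.range ((i : ℕ) + 1)).map n)

/-- `x` is a normalized weakly null tree (of infinite length): every member indexed by a
strictly increasing list has norm one, and every node is weakly null. -/
def IsNWNTree (x : List ℕ → X) : Prop :=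
  (∀ l : List ℕ, l.Pairwise (· < ·) → ‖x l‖ = 1) ∧
  ∀ l : List ℕ, l.Pairwise (· < ·) → ∀ f : StrongDual ℝ X,
    Tendsto (fun m => f (x (l ++ [m]))) atTop (nhds 0)

/-- `x` is a normalized weakly null tree of length `k`. -/
def IsNWNTreeLen (k : ℕ) (x : List ℕ → X) : Prop :=
  (∀ l : List ℕ, l.Pairwise (· < ·) → l.length ≤ k → ‖x l‖ = 1) ∧
  ∀ l : List ℕ, l.Pairwise (· < ·) → l.length < k → ∀ f : StrongDual ℝ X,
    Tendsto (fun m => f (x (l ++ [m]))) atTop (nhds 0)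

/-- `X` satisfies `C`-`V`-lower tree estimates w.r.t. the basis `(v i)`. -/
def LowerTreeEst (X : Type*) [NormedAddCommGroup X] [NormedSpace ℝ X]
    {V : Type*} [NormedAddCommGroup V] [NormedSpace ℝ V] (C : ℝ) (v : ℕ → V) : Prop :=
  ∀ x : List ℕ → X, IsNWNTree x → ∃ n : ℕ → ℕ, StrictMono n ∧ Dominates C (TreeBranch x n) v

/-- `X` satisfies `C`-`U`-upper tree estimates w.r.t. the basis `(u i)`. -/
def UpperTreeEst (X : Type*) [NormedAddCommGroup X] [NormedSpace ℝ X]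
    {U : Type*} [NormedAddCommGroup U] [NormedSpace ℝ U] (C : ℝ) (u : ℕ → U) : Prop :=
  ∀ x : List ℕ → X, IsNWNTree x → ∃ n : ℕ → ℕ, StrictMono n ∧ Dominates C u (TreeBranch x n)

/-- `X` satisfies asymptotic `C`-`V`-lower tree estimates. -/
def AsympLowerTreeEst (X : Type*) [NormedAddCommGroup X] [NormedSpace ℝ X]
    {V : Type*} [NormedAddCommGroup V] [NormedSpace ℝ V] (C : ℝ) (v : ℕ → V) : Prop :=
  ∀ (k : ℕ) (x : List ℕ → X), IsNWNTreeLen k x →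
    ∃ n : ℕ → ℕ, StrictMono n ∧ DominatesFin C (TreeBranchFin k x n) fun i : Fin k => v i

/-- `X` satisfies asymptotic `C`-`U`-upper tree estimates. -/
def AsympUpperTreeEst (X : Type*) [NormedAddCommGroup X] [NormedSpace ℝ X]
    {U : Type*} [NormedAddCommGroup U] [NormedSpace ℝ U] (C : ℝ) (u : ℕ → U) : Prop :=
  ∀ (k : ℕ) (x : List ℕ → X), IsNWNTreeLen k x →
    ∃ n : ℕ → ℕ, StrictMono n ∧ DominatesFin C (fun i : Fin k => u i) (TreeBranchFin k x n)

end Trees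

/-- A finite-dimensional decomposition (FDD) of `Z`: a sequence of finite-dimensional
subspaces together with the corresponding continuous coordinate projections, such that every
`z ∈ Z` is the norm-convergent sum of its coordinates. -/
structure FDD (Z : Type*) [NormedAddCommGroup Z] [NormedSpace ℝ Z] where
  E : ℕ → Submodule ℝ Z
  finDim : ∀ n, FiniteDimensional ℝ (E n)
  proj : ℕ → Z →L[ℝ] Z
  mem_proj : ∀ n z, proj n z ∈ E n
  proj_self : ∀ n, ∀ z ∈ E n, proj n z = z
  proj_other : ∀ m n, m ≠ n → ∀ z ∈ E n, proj m z = 0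
  tendsto_partialSum :
    ∀ z : Z, Tendsto (fun N => ∑ n ∈ Finset.range N, proj n z) atTop (nhds z)

section FDDdefs

variable {Z V U : Type*} [NormedAddCommGroup Z] [NormedSpace ℝ Z]
variable [NormedAddCommGroup V] [NormedSpace ℝ V] [NormedAddCommGroup U] [NormedSpace ℝ U]

/-- The support of `z` with respect to the FDD `F`. -/
def FDD.supp (F : FDD Z) (z : Z) : Set ℕ := {i | F.proj i z ≠ 0}

/-- `(z j)` is a block sequence of the FDD `F`. -/
def FDD.IsBlockSeq (F : FDD Z) (z : ℕ → Z) : Prop :=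
  (∀ j, z j ≠ 0 ∧ (F.supp (z j)).Finite) ∧
  ∀ j, ∀ i ∈ F.supp (z j), ∀ i' ∈ F.supp (z (j + 1)), i < i'

/-- The FDD `F` is shrinking: every bounded block sequence is weakly null. -/
def FDD.Shrinking (F : FDD Z) : Prop :=
  ∀ z : ℕ → Z, F.IsBlockSeq z → (∃ M : ℝ, ∀ j, ‖z j‖ ≤ M) →
    ∀ f : StrongDual ℝ Z, Tendsto (fun j => f (z j)) atTop (nhds 0)

/-- The projection onto the coordinates in `[a,b)`. -/
def FDD.projIco (F : FDD Z) (a b : ℕ) : Z →L[ℝ] Z := ∑ i ∈ Finset.Ico a b, F.proj i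

/-- The FDD `F` is bimonotone. -/
def FDD.Bimonotone (F : FDD Z) : Prop := ∀ (a b : ℕ) (z : Z), ‖F.projIco a b z‖ ≤ ‖z‖

/-- `G` is a blocking of the FDD `F`. -/
def FDD.IsBlocking (G F : FDD Z) : Prop :=
  ∃ k : ℕ → ℕ, k 0 = 0 ∧ StrictMono k ∧
    ∀ n, (G.proj n : Z →L[ℝ] Z) = ∑ i ∈ Finset.Ico (k n) (k (n + 1)), F.proj i

/-- The FDD `F` satisfies `C`-`V`-lower estimates in `Z`. -/
def FDD.LowerEst (F : FDD Z) (C : ℝ) (v : ℕ → V) : Prop :=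
  ∀ z : ℕ → Z, F.IsBlockSeq z → (∀ j, ‖z j‖ = 1) → Dominates C z v

/-- The FDD `F` satisfies `C`-`U`-upper estimates in `Z`. -/
def FDD.UpperEst (F : FDD Z) (C : ℝ) (u : ℕ → U) : Prop :=
  ∀ z : ℕ → Z, F.IsBlockSeq z → (∀ j, ‖z j‖ = 1) → Dominates C u z

/-- `(x i)_{i<n}` is a block sequence of `(E i)_{i≥n}` (of length `n`) of the FDD `F`. -/
def FDD.IsAsympBlock (F : FDD Z) (n : ℕ) (x : Fin n → Z) : Prop :=
  (∀ i, x i ≠ 0 ∧ (F.supp (x i)).Finite ∧ ∀ j ∈ F.supp (x i), n ≤ j) ∧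
  ∀ i i' : Fin n, i < i' → ∀ j ∈ F.supp (x i), ∀ j' ∈ F.supp (x i'), j < j'

/-- The FDD `F` satisfies asymptotic `C`-`V`-lower estimates in `Z`. -/
def FDD.AsympLowerEst (F : FDD Z) (C : ℝ) (v : ℕ → V) : Prop :=
  ∀ (n : ℕ) (x : Fin n → Z), F.IsAsympBlock n x →
    C⁻¹ * ‖∑ i, ‖x i‖ • v (i : ℕ)‖ ≤ ‖∑ i, x i‖

/-- The FDD `F` satisfies asymptotic `C`-`U`-upper estimates in `Z`. -/
def FDD.AsympUpperEst (F : FDD Z) (C : ℝ) (u : ℕ → U) : Prop :=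
  ∀ (n : ℕ) (x : Fin n → Z), F.IsAsympBlock n x →
    ‖∑ i, x i‖ ≤ C * ‖∑ i, ‖x i‖ • u (i : ℕ)‖

/-- The support of a functional `f` with respect to the dual FDD `(E_i^*)`. -/
def FDD.dualSupp (F : FDD Z) (f : StrongDual ℝ Z) : Set ℕ :=
  {i | f.comp (F.proj i) ≠ 0}

/-- `(g j)` is a block sequence of the dual FDD `(E_i^*)` in `Z^(*)`. -/
def FDD.IsDualBlockSeq (F : FDD Z) (g : ℕ → StrongDual ℝ Z) : Prop :=
  (∀ j, g j ≠ 0 ∧ (F.dualSupp (g j)).Finite) ∧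
  ∀ j, ∀ i ∈ F.dualSupp (g j), ∀ i' ∈ F.dualSupp (g (j + 1)), i < i'

/-- The space `c₀₀(⊕ E_i)` of finitely supported vectors of the FDD `F`. -/
def FDD.finVectors (F : FDD Z) : Submodule ℝ Z where
  carrier := {z | (F.supp z).Finite}
  zero_mem' := by
    refine Set.Finite.subset Set.finite_empty ?_
    intro i hi
    simp only [FDD.supp, Set.mem_setOf_eq, map_zero, ne_eq, not_true_eq_false] at hi
  add_mem' := by
    intro a b ha hb
    refine Set.Finite.subset (Set.Finite.union ha hb) ?_
    intro i hi
    simp only [FDD.supp, Set.mem_setOf_eq, Set.mem_union] at hi ⊢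
    by_contra hcon
    push_neg at hcon
    rw [map_add, hcon.1, hcon.2, add_zero] at hi
    exact hi rfl
  smul_mem' := by
    intro c a ha
    refine Set.Finite.subset ha ?_
    intro i hi
    simp only [FDD.supp, Set.mem_setOf_eq] at hi ⊢
    intro h0
    rw [map_smul, h0, smul_zero] at hi
    exact hi rfl

/-- The quantity `‖∑_{j<k} ‖P_{[n_j, n_{j+1})} z‖ v_j‖` appearing in the definition of the
norm of `Z_V(E)`. -/
def zvBlockSum (F : FDD Z) (v : ℕ → V) (z : Z) (k : ℕ) (n : ℕ → ℕ) : ℝ :=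
  ‖∑ j ∈ Finset.range k, ‖F.projIco (n j) (n (j + 1)) z‖ • v j‖

/-- Admissibility of the data `(k, n)` in the definition of the norm of `Z_V(E)`. -/
def IsZVAdmissible (k : ℕ) (n : ℕ → ℕ) : Prop := 1 ≤ k ∧ n 0 = 0 ∧ StrictMono n

/-- The norm of the space `Z_V(E)`. -/
def zvNorm (F : FDD Z) (v : ℕ → V) (z : Z) : ℝ :=
  sSup {r | ∃ k n, IsZVAdmissible k n ∧ r = zvBlockSum F v z k n}

end FDDdefs

/-- A bundled Banach space. -/
structure BanachPack where
  carrier : Type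
  [grp : NormedAddCommGroup carrier]
  [nsp : NormedSpace ℝ carrier]
  [cpl : CompleteSpace carrier]

attribute [instance] BanachPack.grp BanachPack.nsp BanachPack.cpl

/-- A bundled Banach space with an FDD. -/
structure BanachFDDPack where
  carrier : Type
  [grp : NormedAddCommGroup carrier]
  [nsp : NormedSpace ℝ carrier]
  [cpl : CompleteSpace carrier]
  fdd : FDD carrier

attribute [instance] BanachFDDPack.grp BanachFDDPack.nsp BanachFDDPack.cpl

section Tsirelson

variable {V : Type*} [NormedAddCommGroup V] [NormedSpace ℝ V]

/-- The auxiliary norms `‖·‖_{ℓ, T(V,γ)}` on `c₀₀ = ℕ →₀ ℝ` used in the definition of the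
Tsirelson space `T(V,γ)` associated to `V` and `γ`. -/
def tsNormAux (v : ℕ → V) (γ : ℝ) : ℕ → (ℕ →₀ ℝ) → ℝ
  | 0 => fun x => ⨆ i, |x i|
  | ℓ + 1 => fun x =>
      max (tsNormAux v γ ℓ x)
        (sSup {r | ∃ (n : ℕ) (A : ℕ → Finset ℕ), 1 ≤ n ∧
          (∀ i < n, ∀ a ∈ A i, n ≤ a) ∧
          (∀ i j, i < j → j < n → ∀ a ∈ A i, ∀ b ∈ A j, a < b) ∧
          r = γ * ‖∑ i ∈ Finset.range n, tsNormAux v γ ℓ (x.filter (· ∈ A i)) • v i‖})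

/-- The norm of the Tsirelson space `T(V,γ)` on `c₀₀ = ℕ →₀ ℝ`. -/
def tsNorm (v : ℕ → V) (γ : ℝ) (x : ℕ →₀ ℝ) : ℝ := ⨆ ℓ, tsNormAux v γ ℓ x

end Tsirelson

/-- The dual norm, on `c₀₀ = ℕ →₀ ℝ`, of a norm `N` on `c₀₀`. -/
def dualNormCoo (N : (ℕ →₀ ℝ) → ℝ) (b : ℕ →₀ ℝ) : ℝ :=
  sSup {r | ∃ x : ℕ →₀ ℝ, N x ≤ 1 ∧ r = x.sum fun i c => c * b i}

/-- The `ℓ_p` norm of a finite real sequence (`p = ∞` gives the max norm). -/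
def lpSum (p : ℝ≥0∞) {k : ℕ} (a : Fin k → ℝ) : ℝ :=
  if p = ∞ then ⨆ i, |a i| else (∑ i, |a i| ^ p.toReal) ^ (1 / p.toReal)


section LpEstimates

variable {X Z : Type*} [NormedAddCommGroup X] [NormedSpace ℝ X]
variable [NormedAddCommGroup Z] [NormedSpace ℝ Z]

/-- `X` satisfies asymptotic `C`-`ℓ_p`-lower tree estimates. -/
def AsympLpLowerTreeEst (X : Type*) [NormedAddCommGroup X] [NormedSpace ℝ X]
    (C : ℝ) (p : ℝ≥0∞) : Prop :=
  ∀ (k : ℕ) (x : List ℕ → X), IsNWNTreeLen k x →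
    ∃ n : ℕ → ℕ, StrictMono n ∧ ∀ a : Fin k → ℝ,
      C⁻¹ * lpSum p a ≤ ‖∑ i, a i • TreeBranchFin k x n i‖

/-- `X` satisfies asymptotic `C`-`ℓ_q`-upper tree estimates. -/
def AsympLpUpperTreeEst (X : Type*) [NormedAddCommGroup X] [NormedSpace ℝ X]
    (C : ℝ) (q : ℝ≥0∞) : Prop :=
  ∀ (k : ℕ) (x : List ℕ → X), IsNWNTreeLen k x →
    ∃ n : ℕ → ℕ, StrictMono n ∧ ∀ a : Fin k → ℝ,
      ‖∑ i, a i • TreeBranchFin k x n i‖ ≤ C * lpSum q a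

/-- The FDD `F` satisfies asymptotic `C`-`ℓ_p`-lower estimates. -/
def FDD.AsympLpLowerEst (F : FDD Z) (C : ℝ) (p : ℝ≥0∞) : Prop :=
  ∀ (n : ℕ) (x : Fin n → Z), F.IsAsympBlock n x →
    C⁻¹ * lpSum p (fun i => ‖x i‖) ≤ ‖∑ i, x i‖

/-- The FDD `F` satisfies asymptotic `C`-`ℓ_q`-upper estimates. -/
def FDD.AsympLpUpperEst (F : FDD Z) (C : ℝ) (q : ℝ≥0∞) : Prop :=
  ∀ (n : ℕ) (x : Fin n → Z), F.IsAsympBlock n x →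
    ‖∑ i, x i‖ ≤ C * lpSum q (fun i => ‖x i‖)

end LpEstimates

end


section Statement13Aux

variable {V : Type*} [NormedAddCommGroup V] [NormedSpace ℝ V]

private lemma abs_le_absSum (x : ℕ →₀ ℝ) (i : ℕ) : |x i| ≤ ∑ j ∈ x.support, |x j| := by
  by_cases h : i ∈ x.support
  · exact Finset.single_le_sum (f := fun j => |x j|) (fun j _ => abs_nonneg _) h
  · rw [Finsupp.notMem_support_iff.mp h, abs_zero]
    exact Finset.sum_nonneg fun j _ => abs_nonneg _

private lemma bddAbove_abs (x : ℕ →₀ ℝ) : BddAbove (Set.range fun i => |x i|) :=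
  ⟨∑ j ∈ x.support, |x j|, by rintro r ⟨i, rfl⟩; exact abs_le_absSum x i⟩

private lemma tsAux_nonneg (v : ℕ → V) (γ : ℝ) (ℓ : ℕ) (x : ℕ →₀ ℝ) :
    0 ≤ tsNormAux v γ ℓ x := by
  induction ℓ with
  | zero =>
    simp only [tsNormAux]
    exact (abs_nonneg (x 0)).trans (le_ciSup (bddAbove_abs x) 0)
  | succ ℓ ih =>
    simp only [tsNormAux]
    exact ih.trans (le_max_left _ _)

private lemma tsAux_zero (v : ℕ → V) (γ : ℝ) (ℓ : ℕ) :
    tsNormAux v γ ℓ (0 : ℕ →₀ ℝ) = 0 := by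
  induction ℓ with
  | zero =>
    simp only [tsNormAux]
    simp
  | succ ℓ ih =>
    simp only [tsNormAux]
    have hall : ∀ r ∈ {r | ∃ (n : ℕ) (A : ℕ → Finset ℕ), 1 ≤ n ∧
          (∀ i < n, ∀ a ∈ A i, n ≤ a) ∧
          (∀ i j, i < j → j < n → ∀ a ∈ A i, ∀ b ∈ A j, a < b) ∧
          r = γ * ‖∑ i ∈ Finset.range n,
            tsNormAux v γ ℓ ((0 : ℕ →₀ ℝ).filter (· ∈ A i)) • v i‖}, r = 0 := by
      rintro r ⟨n, A, h1, h2, h3, rfl⟩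
      simp [Finsupp.filter_zero, ih]
    have hmem : (0 : ℝ) ∈ {r | ∃ (n : ℕ) (A : ℕ → Finset ℕ), 1 ≤ n ∧
          (∀ i < n, ∀ a ∈ A i, n ≤ a) ∧
          (∀ i j, i < j → j < n → ∀ a ∈ A i, ∀ b ∈ A j, a < b) ∧
          r = γ * ‖∑ i ∈ Finset.range n,
            tsNormAux v γ ℓ ((0 : ℕ →₀ ℝ).filter (· ∈ A i)) • v i‖} := by
      refine ⟨1, fun _ => ∅, le_rfl, by simp, by simp, ?_⟩
      simp [Finsupp.filter_zero, ih]
    have hsup : sSup {r | ∃ (n : ℕ) (A : ℕ → Finset ℕ), 1 ≤ n ∧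
          (∀ i < n, ∀ a ∈ A i, n ≤ a) ∧
          (∀ i j, i < j → j < n → ∀ a ∈ A i, ∀ b ∈ A j, a < b) ∧
          r = γ * ‖∑ i ∈ Finset.range n,
            tsNormAux v γ ℓ ((0 : ℕ →₀ ℝ).filter (· ∈ A i)) • v i‖} = 0 := by
      refine le_antisymm (Real.sSup_le (fun r hr => (hall r hr).le) le_rfl) ?_
      exact le_csSup ⟨0, fun r hr => (hall r hr).le⟩ hmem
    rw [ih, hsup, max_self]

private lemma elt_le_absSum (v : ℕ → V) (hvn : SeqNormalized v) (γ : ℝ) (hγ0 : 0 ≤ γ)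
    (hγ1 : γ ≤ 1) (ℓ : ℕ)
    (hIH : ∀ y : ℕ →₀ ℝ, tsNormAux v γ ℓ y ≤ ∑ j ∈ y.support, |y j|)
    (x : ℕ →₀ ℝ) (n : ℕ) (A : ℕ → Finset ℕ)
    (h3 : ∀ i j, i < j → j < n → ∀ a ∈ A i, ∀ b ∈ A j, a < b) :
    γ * ‖∑ i ∈ Finset.range n, tsNormAux v γ ℓ (x.filter (· ∈ A i)) • v i‖ ≤
      ∑ j ∈ x.support, |x j| := by
  classical
  have step1 : ‖∑ i ∈ Finset.range n, tsNormAux v γ ℓ (x.filter (· ∈ A i)) • v i‖ ≤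
      ∑ i ∈ Finset.range n, tsNormAux v γ ℓ (x.filter (· ∈ A i)) := by
    refine (norm_sum_le _ _).trans (Finset.sum_le_sum fun i _ => ?_)
    rw [norm_smul, hvn i, mul_one, Real.norm_eq_abs,
      abs_of_nonneg (tsAux_nonneg v γ ℓ _)]
  have step2 : ∀ i, tsNormAux v γ ℓ (x.filter (· ∈ A i)) ≤
      ∑ j ∈ x.support.filter (· ∈ A i), |x j| := by
    intro i
    refine (hIH _).trans_eq ?_
    rw [Finsupp.support_filter]
    exact Finset.sum_congr rfl fun j hj => by
      rw [Finsupp.filter_apply_pos _ _ (Finset.mem_filter.mp hj).2]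
  have hdisj : (↑(Finset.range n) : Set ℕ).PairwiseDisjoint
      (fun i => x.support.filter (· ∈ A i)) := by
    intro i hi j hj hij
    simp only [Finset.coe_range, Set.mem_Iio] at hi hj
    have key : ∀ {p q : ℕ}, p < q → q < n →
        Disjoint (x.support.filter (· ∈ A p)) (x.support.filter (· ∈ A q)) := by
      intro p q hpq hq
      rw [Finset.disjoint_left]
      intro k hk hk'
      exact lt_irrefl k (h3 p q hpq hq k (Finset.mem_filter.mp hk).2 k
        (Finset.mem_filter.mp hk').2)
    rcases hij.lt_or_gt with h | h
    · exact key h hj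
    · exact (key h hi).symm
  have step3 : ∑ i ∈ Finset.range n, ∑ j ∈ x.support.filter (· ∈ A i), |x j| ≤
      ∑ j ∈ x.support, |x j| := by
    rw [← Finset.sum_biUnion hdisj]
    exact Finset.sum_le_sum_of_subset_of_nonneg
      (Finset.biUnion_subset.mpr fun i _ => Finset.filter_subset _ _)
      (fun j _ _ => abs_nonneg _)
  calc γ * ‖∑ i ∈ Finset.range n, tsNormAux v γ ℓ (x.filter (· ∈ A i)) • v i‖
      ≤ 1 * ‖∑ i ∈ Finset.range n, tsNormAux v γ ℓ (x.filter (· ∈ A i)) • v i‖ :=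
        mul_le_mul_of_nonneg_right hγ1 (norm_nonneg _)
    _ = ‖∑ i ∈ Finset.range n, tsNormAux v γ ℓ (x.filter (· ∈ A i)) • v i‖ := one_mul _
    _ ≤ ∑ i ∈ Finset.range n, tsNormAux v γ ℓ (x.filter (· ∈ A i)) := step1
    _ ≤ ∑ i ∈ Finset.range n, ∑ j ∈ x.support.filter (· ∈ A i), |x j| :=
        Finset.sum_le_sum fun i _ => step2 i
    _ ≤ ∑ j ∈ x.support, |x j| := step3

private lemma tsAux_le_absSum (v : ℕ → V) (hvn : SeqNormalized v) (γ : ℝ) (hγ0 : 0 ≤ γ)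
    (hγ1 : γ ≤ 1) (ℓ : ℕ) (x : ℕ →₀ ℝ) :
    tsNormAux v γ ℓ x ≤ ∑ j ∈ x.support, |x j| := by
  induction ℓ generalizing x with
  | zero =>
    simp only [tsNormAux]
    exact ciSup_le (abs_le_absSum x)
  | succ ℓ ih =>
    simp only [tsNormAux]
    refine max_le (ih x) (Real.sSup_le ?_ (Finset.sum_nonneg fun j _ => abs_nonneg _))
    rintro r ⟨n, A, h1, h2, h3, rfl⟩
    exact elt_le_absSum v hvn γ hγ0 hγ1 ℓ ih x n A h3

private lemma tsAux_bddAbove (v : ℕ → V) (hvn : SeqNormalized v) (γ : ℝ) (hγ0 : 0 ≤ γ)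
    (hγ1 : γ ≤ 1) (ℓ : ℕ) (x : ℕ →₀ ℝ) :
    BddAbove {r | ∃ (n : ℕ) (A : ℕ → Finset ℕ), 1 ≤ n ∧
      (∀ i < n, ∀ a ∈ A i, n ≤ a) ∧
      (∀ i j, i < j → j < n → ∀ a ∈ A i, ∀ b ∈ A j, a < b) ∧
      r = γ * ‖∑ i ∈ Finset.range n, tsNormAux v γ ℓ (x.filter (· ∈ A i)) • v i‖} := by
  refine ⟨∑ j ∈ x.support, |x j|, ?_⟩
  rintro r ⟨n, A, h1, h2, h3, rfl⟩
  exact elt_le_absSum v hvn γ hγ0 hγ1 ℓ (fun y => tsAux_le_absSum v hvn γ hγ0 hγ1 ℓ y) x n A h3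

private lemma tsAux_filter_le (v : ℕ → V) (hvn : SeqNormalized v) (γ : ℝ) (hγ0 : 0 ≤ γ)
    (hγ1 : γ ≤ 1) (ℓ : ℕ) (x : ℕ →₀ ℝ) (p : ℕ → Prop) [DecidablePred p] :
    tsNormAux v γ ℓ (x.filter p) ≤ tsNormAux v γ ℓ x := by
  induction ℓ generalizing x p with
  | zero =>
    simp only [tsNormAux]
    refine ciSup_le fun i => ?_
    have h1 : |x.filter p i| ≤ |x i| := by
      rw [Finsupp.filter_apply]
      split_ifs
      · exact le_rfl
      · rw [abs_zero]; exact abs_nonneg _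
    exact h1.trans (le_ciSup (bddAbove_abs x) i)
  | succ ℓ ih =>
    simp only [tsNormAux]
    refine max_le ((ih x p).trans (le_max_left _ _)) ?_
    refine Real.sSup_le ?_ ((tsAux_nonneg v γ ℓ x).trans (le_max_left _ _))
    rintro r ⟨n, A, h1, h2, h3, rfl⟩
    have hmem : γ * ‖∑ i ∈ Finset.range n,
        tsNormAux v γ ℓ ((x.filter p).filter (· ∈ A i)) • v i‖ ∈
        {r | ∃ (n : ℕ) (A : ℕ → Finset ℕ), 1 ≤ n ∧
          (∀ i < n, ∀ a ∈ A i, n ≤ a) ∧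
          (∀ i j, i < j → j < n → ∀ a ∈ A i, ∀ b ∈ A j, a < b) ∧
          r = γ * ‖∑ i ∈ Finset.range n, tsNormAux v γ ℓ (x.filter (· ∈ A i)) • v i‖} := by
      refine ⟨n, fun i => (A i).filter p, h1,
        fun i hi a ha => h2 i hi a (Finset.mem_filter.mp ha).1,
        fun i j hij hj a ha b hb => h3 i j hij hj a (Finset.mem_filter.mp ha).1 b
          (Finset.mem_filter.mp hb).1, ?_⟩
      congr 2
      refine Finset.sum_congr rfl fun i _ => ?_
      have hfe : (x.filter p).filter (· ∈ A i) = x.filter (· ∈ (A i).filter p) := by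
        ext j
        simp only [Finsupp.filter_apply, Finset.mem_filter]
        split_ifs <;> tauto
      rw [hfe]
    exact le_trans (le_csSup (tsAux_bddAbove v hvn γ hγ0 hγ1 ℓ x) hmem)
      (le_max_right (tsNormAux v γ ℓ x) _)

private lemma filter_sum_eq {X : Type*} [AddCommGroup X] [Module ℝ X]
    (e : ℕ → X) (a : ℕ →₀ ℝ) (J : Finset ℕ) :
    ((a.filter (· ∈ J)).sum fun i r => r • e i) = ∑ j ∈ J, a j • e j := by
  classical
  rw [Finsupp.sum, Finsupp.support_filter]
  rw [show (∑ j ∈ {x ∈ a.support | x ∈ J}, (a.filter (· ∈ J)) j • e j) =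
      ∑ j ∈ a.support.filter (· ∈ J), a j • e j from
    Finset.sum_congr rfl fun j hj => by
      rw [Finsupp.filter_apply_pos _ _ (Finset.mem_filter.mp hj).2]]
  refine Finset.sum_subset (fun j hj => (Finset.mem_filter.mp hj).2) ?_
  intro j hJ hns
  have : a j = 0 := by
    by_contra hne
    exact hns (Finset.mem_filter.mpr ⟨Finsupp.mem_support_iff.mpr hne, hJ⟩)
  rw [this, zero_smul]

private lemma smul_finsupp_sum {X : Type*} [AddCommGroup X] [Module ℝ X]
    (e : ℕ → X) (r : ℝ) (f : ℕ →₀ ℝ) :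
    ((r • f).sum fun i c => c • e i) = r • (f.sum fun i c => c • e i) := by
  rw [Finsupp.sum_smul_index' (fun i => zero_smul ℝ (e i))]
  rw [Finsupp.sum, Finsupp.sum, Finset.smul_sum]
  exact Finset.sum_congr rfl fun j _ => smul_assoc r (f j) (e j)

private lemma sum_Ico_chain {M : Type*} [AddCommMonoid M] (F : ℕ → M) (g : ℕ → ℕ)
    (hg : Monotone g) (m : ℕ) :
    ∑ t ∈ Finset.range m, (∑ j ∈ Finset.Ico (g t) (g (t + 1)), F j) =
      ∑ j ∈ Finset.Ico (g 0) (g m), F j := by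
  induction m with
  | zero => simp
  | succ m ih =>
    rw [Finset.sum_range_succ, ih,
      Finset.sum_Ico_consecutive F (hg (Nat.zero_le m)) (hg (Nat.le_succ m))]

end Statement13Aux

/-- If `(e_i)` is a normalized basis of `X` with projection constant `K`
satisfying asymptotic `C`-`V`-lower estimates, and `0 < γ < 1` with `γ ≤ (KC)⁻¹`, then
`(e_i)` `K`-dominates the unit vector basis of the Tsirelson space `T(V,γ)`. -/
theorem statement13 {X V : Type*}
    [NormedAddCommGroup X] [NormedSpace ℝ X] [CompleteSpace X]
    [NormedAddCommGroup V] [NormedSpace ℝ V] [CompleteSpace V]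
    (v : ℕ → V) (hv : Is1SubsymBasis v)
    (γ : ℝ) (hγ0 : 0 < γ) (hγ1 : γ < 1)
    (e : ℕ → X) (heNorm : SeqNormalized e) (heTotal : SeqTotal e)
    (K : ℝ) (hK : 1 ≤ K)
    (hKproj : ∀ (a : ℕ →₀ ℝ) (m n' : ℕ),
      ‖∑ i ∈ Finset.Icc m n', a i • e i‖ ≤ K * ‖a.sum fun i r => r • e i‖)
    (C : ℝ) (hC : 1 ≤ C)
    (hlow : ∀ (n : ℕ) (x : Fin n → X) (c : Fin n → (ℕ →₀ ℝ)),
      (∀ i, x i = (c i).sum fun ii r => r • e ii) →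
      (∀ i, ‖x i‖ = 1) →
      (∀ i, ∀ j ∈ (c i).support, n ≤ j) →
      (∀ i i' : Fin n, i < i' → ∀ j ∈ (c i).support, ∀ j' ∈ (c i').support, j < j') →
      ∀ a : Fin n → ℝ, C⁻¹ * ‖∑ i, a i • v (i : ℕ)‖ ≤ ‖∑ i, a i • x i‖)
    (hγK : γ ≤ (K * C)⁻¹) :
    ∀ a : ℕ →₀ ℝ, tsNorm v γ a ≤ K * ‖a.sum fun i r => r • e i‖ := by
  classical
  have hvn : SeqNormalized v := hv.1.1
  have hvu : SeqUncond v := hv.1.2.1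
  have hvs : SeqSpreading v := hv.2
  have hK0 : (0:ℝ) < K := lt_of_lt_of_le one_pos hK
  have hC0 : (0:ℝ) < C := lt_of_lt_of_le one_pos hC
  have hcoef : ∀ (b : ℕ →₀ ℝ) (i : ℕ), |b i| ≤ K * ‖b.sum fun i r => r • e i‖ := by
    intro b i
    have h := hKproj b i i
    rwa [Finset.Icc_self, Finset.sum_singleton, norm_smul, Real.norm_eq_abs, heNorm i,
      mul_one] at h
  have main : ∀ ℓ (a : ℕ →₀ ℝ), tsNormAux v γ ℓ a ≤ K * ‖a.sum fun i r => r • e i‖ := by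
    intro ℓ
    induction ℓ with
    | zero =>
      intro a
      simp only [tsNormAux]
      exact ciSup_le fun i => hcoef a i
    | succ ℓ ih =>
      intro a
      simp only [tsNormAux]
      have hRHS0 : 0 ≤ K * ‖a.sum fun i r => r • e i‖ := mul_nonneg hK0.le (norm_nonneg _)
      refine max_le (ih a) (Real.sSup_le ?_ hRHS0)
      rintro r ⟨n, A, h1, h2, h3, rfl⟩
      set b : ℕ → ℝ := fun i => tsNormAux v γ ℓ (a.filter (· ∈ A i)) with hb
      -- the set of relevant indices
      set s : Finset ℕ := (Finset.range n).filter (fun i => ((A i) ∩ a.support).Nonempty)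
        with hs
      have hsub : s ⊆ Finset.range n := Finset.filter_subset _ _
      have hbz : ∀ i ∈ Finset.range n, i ∉ s → b i = 0 := by
        intro i hi his
        have hemp : a.filter (· ∈ A i) = 0 := by
          ext j
          rw [Finsupp.filter_apply]
          split_ifs with hj
          · by_contra hne
            exact his (Finset.mem_filter.mpr ⟨hi,
              ⟨j, Finset.mem_inter.mpr ⟨hj, Finsupp.mem_support_iff.mpr hne⟩⟩⟩)
          · simp
        rw [hb]
        simp only
        rw [hemp, tsAux_zero]
      have hsum_s : ∑ i ∈ Finset.range n, b i • v i = ∑ i ∈ s, b i • v i :=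
        (Finset.sum_subset hsub (fun i hi his => by rw [hbz i hi his, zero_smul])).symm
      by_cases hsne : s.Nonempty
      swap
      · rw [Finset.not_nonempty_iff_eq_empty] at hsne
        have : ∑ i ∈ Finset.range n, b i • v i = 0 := by
          rw [hsum_s, hsne, Finset.sum_empty]
        rw [this, norm_zero, mul_zero]
        exact hRHS0
      set m := s.card with hm
      have hm1 : 1 ≤ m := Finset.card_pos.mpr hsne
      have hmn : m ≤ n := by
        have := Finset.card_le_card hsub
        simpa using this
      set σ : Fin m ≃o {x // x ∈ s} := s.orderIsoOfFin rfl with hσ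
      set idx : ℕ → ℕ := fun t => if h : t < m then (σ ⟨t, h⟩ : ℕ) else s.max' hsne + 1 + t
        with hidx
      have hidx_mem : ∀ t, t < m → idx t ∈ s := by
        intro t h
        rw [hidx]
        simp only [dif_pos h]
        exact (σ ⟨t, h⟩).2
      have hidx_mono : StrictMono idx := by
        intro t t' h
        rw [hidx]
        simp only
        by_cases h1 : t' < m
        · have h0 : t < m := h.trans h1
          rw [dif_pos h0, dif_pos h1]
          have := σ.strictMono (show (⟨t, h0⟩ : Fin m) < ⟨t', h1⟩ from h)
          exact_mod_cast this
        · by_cases h0 : t < m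
          · rw [dif_pos h0, dif_neg h1]
            have hle : ((σ ⟨t, h0⟩ : ℕ)) ≤ s.max' hsne := Finset.le_max' s _ (σ ⟨t, h0⟩).2
            omega
          · rw [dif_neg h0, dif_neg h1]
            omega
      have hidx_lt_n : ∀ t, t < m → idx t < n := fun t h =>
        Finset.mem_range.mp (hsub (hidx_mem t h))
      have hAne : ∀ t, t < m → ((A (idx t)) ∩ a.support).Nonempty := fun t h =>
        (Finset.mem_filter.mp (hidx_mem t h)).2
      set c : ℕ → ℕ := fun t => if h : t < m then ((A (idx t)) ∩ a.support).min' (hAne t h)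
        else 0 with hc
      have hc_mem : ∀ t, t < m → c t ∈ A (idx t) ∩ a.support := by
        intro t h
        rw [hc]
        simp only [dif_pos h]
        exact Finset.min'_mem _ _
      have hc_min : ∀ t (h : t < m), ∀ j ∈ A (idx t) ∩ a.support, c t ≤ j := by
        intro t h j hj
        rw [hc]
        simp only [dif_pos h]
        exact Finset.min'_le _ _ hj
      have hm10 : m - 1 < m := by omega
      set D : ℕ := ((A (idx (m - 1))) ∩ a.support).max' (hAne (m - 1) hm10) with hD
      have hDle : ∀ j ∈ A (idx (m - 1)) ∩ a.support, j ≤ D := fun j hj =>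
        Finset.le_max' _ _ hj
      have hAord : ∀ t t', t < t' → t' < m → ∀ j ∈ A (idx t), ∀ j' ∈ A (idx t'), j < j' :=
        fun t t' htt' ht' j hj j' hj' =>
          h3 (idx t) (idx t') (hidx_mono htt') (hidx_lt_n t' ht') j hj j' hj'
      have hcc : ∀ t, t + 1 < m → c t < c (t + 1) := by
        intro t h
        exact hAord t (t + 1) (Nat.lt_succ_self t) h (c t)
          (Finset.mem_inter.mp (hc_mem t (by omega))).1 (c (t + 1))
          (Finset.mem_inter.mp (hc_mem (t + 1) h)).1
      set g : ℕ → ℕ := fun t => if t < m then c t else D + 1 with hg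
      have hgval : ∀ t, t < m → g t = c t := by
        intro t h; rw [hg]; simp [h]
      have hgval' : ∀ t, ¬ t < m → g t = D + 1 := by
        intro t h; rw [hg]; simp [h]
      have hg_mono : Monotone g := by
        refine monotone_nat_of_le_succ fun t => ?_
        by_cases h1 : t + 1 < m
        · rw [hgval t (by omega), hgval (t + 1) h1]
          exact (hcc t h1).le
        · by_cases h0 : t < m
          · have ht : t = m - 1 := by omega
            rw [hgval t h0, hgval' (t + 1) h1]
            have : c t ≤ D := by
              rw [ht]
              exact hDle _ (hc_mem (m - 1) hm10)
            omega
          · rw [hgval' t h0, hgval' (t + 1) h1]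
      have hng0 : n ≤ g 0 := by
        rw [hgval 0 hm1]
        have := hc_mem 0 hm1
        exact h2 (idx 0) (hidx_lt_n 0 hm1) (c 0) (Finset.mem_inter.mp this).1
      have hAJ : ∀ t, t < m → (A (idx t)) ∩ a.support ⊆ Finset.Ico (g t) (g (t + 1)) := by
        intro t h j hj
        refine Finset.mem_Ico.mpr ⟨?_, ?_⟩
        · rw [hgval t h]
          exact hc_min t h j hj
        · by_cases h1 : t + 1 < m
          · rw [hgval (t + 1) h1]
            exact hAord t (t + 1) (Nat.lt_succ_self t) h1 j (Finset.mem_inter.mp hj).1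
              (c (t + 1)) (Finset.mem_inter.mp (hc_mem (t + 1) h1)).1
          · have ht : t = m - 1 := by omega
            rw [hgval' (t + 1) h1]
            have : j ≤ D := by
              rw [ht] at hj
              exact hDle j hj
            omega
      set aJ : ℕ → (ℕ →₀ ℝ) := fun t => a.filter (· ∈ Finset.Ico (g t) (g (t + 1)))
        with haJ
      set W : ℕ → X := fun t => ∑ j ∈ Finset.Ico (g t) (g (t + 1)), a j • e j with hWdef
      have hW : ∀ t, ((aJ t).sum fun i r => r • e i) = W t := fun t =>
        filter_sum_eq e a _
      have hWpos : ∀ t, t < m → 0 < ‖W t‖ := by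
        intro t h
        have hcJ : c t ∈ Finset.Ico (g t) (g (t + 1)) := hAJ t h (hc_mem t h)
        have h1 := hcoef (aJ t) (c t)
        rw [hW t] at h1
        have h2' : (aJ t) (c t) = a (c t) := by
          rw [haJ]
          exact Finsupp.filter_apply_pos _ _ hcJ
        have hac : a (c t) ≠ 0 :=
          Finsupp.mem_support_iff.mp (Finset.mem_inter.mp (hc_mem t h)).2
        rw [h2'] at h1
        have habs : 0 < |a (c t)| := abs_pos.mpr hac
        nlinarith [norm_nonneg (W t)]
      have hsuppJ : ∀ t, ∀ j ∈ (aJ t).support, j ∈ Finset.Ico (g t) (g (t + 1)) := by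
        intro t j hj
        rw [haJ] at hj
        simp only [Finsupp.support_filter, Finset.mem_filter] at hj
        exact hj.2
      have hbW : ∀ t, t < m → b (idx t) ≤ K * ‖W t‖ := by
        intro t h
        have hfeq : a.filter (· ∈ A (idx t)) = (aJ t).filter (· ∈ A (idx t)) := by
          ext j
          rw [haJ]
          simp only [Finsupp.filter_apply]
          split_ifs with hA hI
          · rfl
          · by_contra hne
            have hne' : a j ≠ 0 := fun h0 => hne (by rw [h0])
            exact hI (hAJ t h (Finset.mem_inter.mpr ⟨hA, Finsupp.mem_support_iff.mpr hne'⟩))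
          · rfl
        calc b (idx t) = tsNormAux v γ ℓ ((aJ t).filter (· ∈ A (idx t))) := by
              rw [hb]; simp only; rw [hfeq]
          _ ≤ tsNormAux v γ ℓ (aJ t) :=
              tsAux_filter_le v hvn γ hγ0.le hγ1.le ℓ (aJ t) _
          _ ≤ K * ‖(aJ t).sum fun i r => r • e i‖ := ih (aJ t)
          _ = K * ‖W t‖ := by rw [hW t]
      -- reindexing over s
      have himg : Finset.image idx (Finset.range m) = s := by
        apply Finset.eq_of_subset_of_card_le
        · intro j hj
          obtain ⟨t, ht, rfl⟩ := Finset.mem_image.mp hj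
          exact hidx_mem t (Finset.mem_range.mp ht)
        · rw [Finset.card_image_of_injective _ hidx_mono.injective, Finset.card_range]
      have hreidx : ∀ (f : ℕ → V), ∑ i ∈ s, f i = ∑ t ∈ Finset.range m, f (idx t) := by
        intro f
        rw [← himg, Finset.sum_image (fun x _ y _ h => hidx_mono.injective h)]
      have hspread : ‖∑ t ∈ Finset.range m, b (idx t) • v (idx t)‖ =
          ‖∑ t ∈ Finset.range m, b (idx t) • v t‖ :=
        hvs (Finset.range m) (fun t => b (idx t)) idx hidx_mono
      -- unconditionality step
      set ε : ℕ → ℝ := fun t => b (idx t) / (K * ‖W t‖) with hε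
      have hεle : ∀ t, |ε t| ≤ 1 := by
        intro t
        by_cases h : t < m
        · have h1 := hbW t h
          have hpos : 0 < K * ‖W t‖ := mul_pos hK0 (hWpos t h)
          rw [hε]
          simp only
          rw [abs_of_nonneg (div_nonneg (tsAux_nonneg v γ ℓ _) hpos.le)]
          exact (div_le_one hpos).mpr h1
        · have hWz : W t = 0 := by
            rw [hWdef]
            simp only
            have : g t = g (t + 1) := by
              rw [hgval' t h, hgval' (t + 1) (by omega)]
            rw [this, Finset.Ico_self, Finset.sum_empty]
          rw [hε]
          simp [hWz]
      have huncond : ‖∑ t ∈ Finset.range m, b (idx t) • v t‖ ≤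
          ‖∑ t ∈ Finset.range m, (K * ‖W t‖) • v t‖ := by
        have h0 := hvu (Finset.range m) (fun t => K * ‖W t‖) ε hεle
        have heq : ∑ t ∈ Finset.range m, (ε t * (K * ‖W t‖)) • v t =
            ∑ t ∈ Finset.range m, b (idx t) • v t := by
          refine Finset.sum_congr rfl fun t ht => ?_
          have hpos : K * ‖W t‖ ≠ 0 :=
            (mul_pos hK0 (hWpos t (Finset.mem_range.mp ht))).ne'
          rw [hε]
          simp only
          rw [div_mul_cancel₀ _ hpos]
        rwa [heq] at h0
      -- lower estimate step
      set xb : Fin m → X := fun t => ‖W t‖⁻¹ • W t with hxb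
      set cb : Fin m → (ℕ →₀ ℝ) := fun t => ‖W (t : ℕ)‖⁻¹ • aJ (t : ℕ) with hcb
      have hxc : ∀ t : Fin m, xb t = (cb t).sum fun ii r => r • e ii := by
        intro t
        rw [hxb, hcb]
        simp only
        rw [smul_finsupp_sum, hW]
      have hxnorm : ∀ t : Fin m, ‖xb t‖ = 1 := by
        intro t
        rw [hxb]
        simp only
        rw [norm_smul, norm_inv, norm_norm]
        exact inv_mul_cancel₀ (hWpos t t.isLt).ne'
      have hcsupp : ∀ t : Fin m, ∀ j ∈ (cb t).support, j ∈ Finset.Ico (g t) (g (t + 1)) := by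
        intro t j hj
        rw [hcb] at hj
        simp only at hj
        exact hsuppJ t j (Finsupp.support_smul hj)
      have hsupplow : ∀ t : Fin m, ∀ j ∈ (cb t).support, m ≤ j := by
        intro t j hj
        have h1 := (Finset.mem_Ico.mp (hcsupp t j hj)).1
        have h2' : g 0 ≤ g t := hg_mono (Nat.zero_le _)
        omega
      have hsupport_ord : ∀ t t' : Fin m, t < t' →
          ∀ j ∈ (cb t).support, ∀ j' ∈ (cb t').support, j < j' := by
        intro t t' htt' j hj j' hj'
        have h1 := (Finset.mem_Ico.mp (hcsupp t j hj)).2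
        have h2' := (Finset.mem_Ico.mp (hcsupp t' j' hj')).1
        have h3' : g ((t : ℕ) + 1) ≤ g (t' : ℕ) := hg_mono (by exact_mod_cast htt')
        omega
      have hlow' := hlow m xb cb hxc hxnorm hsupplow hsupport_ord
        (fun t => K * ‖W (t : ℕ)‖)
      have hRHSe : ∑ t : Fin m, (K * ‖W (t : ℕ)‖) • xb t =
          K • ∑ t : Fin m, W (t : ℕ) := by
        rw [Finset.smul_sum]
        refine Finset.sum_congr rfl fun t _ => ?_
        rw [hxb]
        simp only
        rw [smul_smul, mul_assoc, mul_inv_cancel₀ (hWpos t t.isLt).ne', mul_one]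
      have hlowrange : ‖∑ t ∈ Finset.range m, (K * ‖W t‖) • v t‖ ≤
          C * (K * ‖∑ t ∈ Finset.range m, W t‖) := by
        have h01 : ∑ t : Fin m, (K * ‖W (t : ℕ)‖) • v (t : ℕ) =
            ∑ t ∈ Finset.range m, (K * ‖W t‖) • v t :=
          Fin.sum_univ_eq_sum_range (fun t => (K * ‖W t‖) • v t) m
        have h02 : ∑ t : Fin m, W (t : ℕ) = ∑ t ∈ Finset.range m, W t :=
          Fin.sum_univ_eq_sum_range W m
        rw [h01, hRHSe, h02] at hlow'
        have h03 : ‖K • ∑ t ∈ Finset.range m, W t‖ =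
            K * ‖∑ t ∈ Finset.range m, W t‖ := by
          rw [norm_smul, Real.norm_eq_abs, abs_of_pos hK0]
        rw [h03] at hlow'
        calc ‖∑ t ∈ Finset.range m, (K * ‖W t‖) • v t‖
            = C * (C⁻¹ * ‖∑ t ∈ Finset.range m, (K * ‖W t‖) • v t‖) := by
              field_simp
          _ ≤ C * (K * ‖∑ t ∈ Finset.range m, W t‖) :=
              mul_le_mul_of_nonneg_left hlow' hC0.le
      -- summing the interval projections
      have hgm : g m = D + 1 := hgval' m (lt_irrefl m)
      have hsumW : ∑ t ∈ Finset.range m, W t = ∑ j ∈ Finset.Icc (g 0) D, a j • e j := by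
        rw [hWdef]
        simp only
        rw [sum_Ico_chain (fun j => a j • e j) g hg_mono m, hgm, Finset.Ico_add_one_right_eq_Icc]
      have hfinal : ‖∑ t ∈ Finset.range m, W t‖ ≤ K * ‖a.sum fun i r => r • e i‖ := by
        rw [hsumW]
        exact hKproj a (g 0) D
      -- assembling
      calc γ * ‖∑ i ∈ Finset.range n, b i • v i‖
          = γ * ‖∑ t ∈ Finset.range m, b (idx t) • v t‖ := by
            rw [hsum_s, hreidx (fun i => b i • v i), hspread]
        _ ≤ γ * ‖∑ t ∈ Finset.range m, (K * ‖W t‖) • v t‖ :=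
            mul_le_mul_of_nonneg_left huncond hγ0.le
        _ ≤ γ * (C * (K * ‖∑ t ∈ Finset.range m, W t‖)) :=
            mul_le_mul_of_nonneg_left hlowrange hγ0.le
        _ ≤ (K * C)⁻¹ * (C * (K * ‖∑ t ∈ Finset.range m, W t‖)) :=
            mul_le_mul_of_nonneg_right hγK
              (mul_nonneg hC0.le (mul_nonneg hK0.le (norm_nonneg _)))
        _ = ‖∑ t ∈ Finset.range m, W t‖ := by
            field_simp
        _ ≤ K * ‖a.sum fun i r => r • e i‖ := hfinal
  intro a
  unfold tsNorm
  exact ciSup_le fun ℓ => main ℓ a
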